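/- Let S_m(v) = σ_m(eigenvalues of A(v)) where A_{ij}(v) = v·v_{ij} − (1/2)|∇v|²δ_{ij}, and let σ_m(v) = σ_m(eigenvalues of the Hessian of v). Then pointwise S_k(v) = v^k·σ_k(v) − Σ_{l=1}^{k} [(n−k+l)!/(l!·(n−k)!)]·S_{k−l}(v)·b^l, where b = (1/2)|∇v|². -/

import Mathlib

open scoped BigOperators Classical
open MeasureTheory

noncomputable section

abbrev E (n : ℕ) := EuclideanSpace ℝ (Fin n)

/-- k-th elementary symmetric polynomial of a vector in ℝⁿ. -/
def esymm (n k : ℕ) (lam : Fin n → ℝ) : ℝ :=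
  ∑ s ∈ Finset.univ.powersetCard k, ∏ i ∈ s, lam i

/-- Eigenvalue vector of a real symmetric matrix (junk value 0 otherwise). -/
def eigs {n : ℕ} (M : Matrix (Fin n) (Fin n) ℝ) : Fin n → ℝ :=
  if h : M.IsHermitian then h.eigenvalues else 0

/-- σ_k of the eigenvalues of a symmetric matrix. -/
def Sk (n k : ℕ) (M : Matrix (Fin n) (Fin n) ℝ) : ℝ := esymm n k (eigs M)

/-- The (closed) Gårding cone Γ_k. -/
def GammaK (n k : ℕ) : Set (Fin n → ℝ) :=
  {lam | ∀ i, 1 ≤ i → i ≤ k → 0 ≤ esymm n i lam}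

/-- i-th partial derivative. -/
def pd {n : ℕ} (u : E n → ℝ) (i : Fin n) (x : E n) : ℝ :=
  fderiv ℝ u x (EuclideanSpace.single i 1)

/-- Hessian matrix. -/
def hess {n : ℕ} (u : E n → ℝ) (x : E n) : Matrix (Fin n) (Fin n) ℝ :=
  Matrix.of fun i j => pd (fun y => pd u j y) i x

/-- |∇u|². -/
def gradsq {n : ℕ} (u : E n → ℝ) (x : E n) : ℝ := ∑ i, (pd u i x) ^ 2

/-- The conformal Schouten-type matrix A_{ij}(u) = u u_{ij} - (1/2)|∇u|² δ_{ij}. -/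
def Amat {n : ℕ} (u : E n → ℝ) (x : E n) : Matrix (Fin n) (Fin n) ℝ :=
  Matrix.of fun i j => u x * hess u x i j - (1 / 2) * gradsq u x * (if i = j then 1 else 0)

section Aux
open Polynomial Matrix


lemma esymm_eq_coeff (n k : ℕ) (hk : k ≤ n) (f : Fin n → ℝ) :
    esymm n k f = (-1 : ℝ) ^ k * (∏ i, (X - C (f i))).coeff (n - k) := by
  have h1 : (∏ i, (X - C (f i))) = ((Finset.univ.val.map f).map (fun t => X - C t)).prod := by
    rw [Multiset.map_map]; rfl
  have hcard : Multiset.card (Finset.univ.val.map f) = n := by simp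
  have h2 := Multiset.prod_X_sub_C_coeff (Finset.univ.val.map f)
    (k := n - k) (by rw [hcard]; omega)
  rw [h1, h2, hcard]
  have : n - (n - k) = k := by omega
  rw [this, Finset.esymm_map_val, ← mul_assoc, ← pow_add, Even.neg_one_pow ⟨k, rfl⟩, one_mul]
  rfl

lemma charpoly_diag {n : ℕ} (d : Fin n → ℝ) :
    (Matrix.diagonal d).charpoly = ∏ i, (X - C (d i)) := by
  have h : charmatrix (Matrix.diagonal d) = Matrix.diagonal (fun i => X - C (d i)) := by
    ext i j
    by_cases hij : i = j
    · subst hij; simp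
    · simp [hij, Matrix.diagonal_apply_ne _ hij]
  rw [Matrix.charpoly, h, Matrix.det_diagonal]

lemma charpoly_conj {n : ℕ} (U : Matrix.unitaryGroup (Fin n) ℝ) (D : Matrix (Fin n) (Fin n) ℝ) :
    ((U : Matrix (Fin n) (Fin n) ℝ) * D * star (U : Matrix (Fin n) (Fin n) ℝ)).charpoly
      = D.charpoly := by
  set Um : Matrix (Fin n) (Fin n) ℝ := (U : Matrix (Fin n) (Fin n) ℝ) with hUm
  have hUU : Um * star Um = 1 := Matrix.mem_unitaryGroup_iff.mp U.2
  have hUU' : star Um * Um = 1 := Matrix.mem_unitaryGroup_iff'.mp U.2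
  let f := RingHom.mapMatrix (m := Fin n) (C : ℝ →+* ℝ[X])
  have hc : charmatrix (Um * D * star Um) = f Um * charmatrix D * f (star Um) := by
    rw [charmatrix, charmatrix, mul_sub, sub_mul]
    congr 1
    · rw [← (Matrix.scalar_commute (n := Fin n) (X : ℝ[X]) (fun r' => Commute.all _ _) (f Um)).eq,
        mul_assoc, ← _root_.map_mul f, hUU, _root_.map_one f, mul_one]
    · rw [← _root_.map_mul f, ← _root_.map_mul f]
  rw [Matrix.charpoly, hc, Matrix.det_mul, Matrix.det_mul, mul_comm, ← mul_assoc,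
    ← Matrix.det_mul, ← _root_.map_mul f, hUU', _root_.map_one f, Matrix.det_one, one_mul,
    Matrix.charpoly]

lemma charpoly_hermitian {n : ℕ} {N : Matrix (Fin n) (Fin n) ℝ} (hN : N.IsHermitian) :
    N.charpoly = ∏ i, (X - C (hN.eigenvalues i)) := by
  have hs := hN.spectral_theorem
  have h0 : (RCLike.ofReal ∘ hN.eigenvalues : Fin n → ℝ) = hN.eigenvalues := by
    ext i; simp
  rw [h0] at hs
  conv_lhs => rw [hs]
  rw [Unitary.conjStarAlgAut_apply, charpoly_conj, charpoly_diag]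



lemma conj_affine {n : ℕ} (U : Matrix.unitaryGroup (Fin n) ℝ) (D : Matrix (Fin n) (Fin n) ℝ)
    (c t : ℝ) :
    c • ((U : Matrix (Fin n) (Fin n) ℝ) * D * star (U : Matrix (Fin n) (Fin n) ℝ))
      + t • (1 : Matrix (Fin n) (Fin n) ℝ)
    = (U : Matrix (Fin n) (Fin n) ℝ) * (c • D + t • 1) * star (U : Matrix (Fin n) (Fin n) ℝ) := by
  have hU : (U : Matrix (Fin n) (Fin n) ℝ) * star (U : Matrix (Fin n) (Fin n) ℝ) = 1 :=
    Matrix.mem_unitaryGroup_iff.mp U.2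
  rw [mul_add, add_mul, mul_smul_comm, smul_mul_assoc, mul_smul_comm, smul_mul_assoc,
    mul_one, hU]

lemma diag_affine {n : ℕ} (d : Fin n → ℝ) (c t : ℝ) :
    c • Matrix.diagonal d + t • (1 : Matrix (Fin n) (Fin n) ℝ)
      = Matrix.diagonal (fun i => c * d i + t) := by
  ext i j
  by_cases h : i = j <;>
    simp [h, Matrix.one_apply, Matrix.diagonal_apply, Matrix.smul_apply]

lemma Sk_affine {n : ℕ} (k : ℕ) (hk : k ≤ n) (H : Matrix (Fin n) (Fin n) ℝ)
    (hH : H.IsHermitian) (c t : ℝ) :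
    Sk n k (c • H + t • 1) = esymm n k (fun i => c * hH.eigenvalues i + t) := by
  set N := c • H + t • (1 : Matrix (Fin n) (Fin n) ℝ) with hNdef
  have hN : N.IsHermitian := by
    simp [N, Matrix.IsHermitian, Matrix.conjTranspose_add, Matrix.conjTranspose_smul,
      ← Matrix.conjTranspose_eq_transpose_of_trivial, hH.eq]
  have key : N.charpoly = ∏ i, (X - C (c * hH.eigenvalues i + t)) := by
    have hs := hH.spectral_theorem
    have h0 : (RCLike.ofReal ∘ hH.eigenvalues : Fin n → ℝ) = hH.eigenvalues := by ext i; simp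
    rw [h0] at hs
    have hNs : N = (hH.eigenvectorUnitary : Matrix (Fin n) (Fin n) ℝ) *
        (Matrix.diagonal fun i => c * hH.eigenvalues i + t) *
        star (hH.eigenvectorUnitary : Matrix (Fin n) (Fin n) ℝ) := by
      rw [hNdef]
      conv_lhs => rw [hs]
      rw [Unitary.conjStarAlgAut_apply, conj_affine, diag_affine]
    rw [hNs, charpoly_conj, charpoly_diag]
  have h1 : esymm n k hN.eigenvalues = esymm n k (fun i => c * hH.eigenvalues i + t) := by
    rw [esymm_eq_coeff n k hk, esymm_eq_coeff n k hk, ← charpoly_hermitian hN, key]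
  rw [Sk, eigs, dif_pos hN]
  exact h1

lemma esymm_shift {n : ℕ} (k : ℕ) (hk : k ≤ n) (μ : Fin n → ℝ) (t : ℝ) :
    esymm n k (fun i => μ i + t)
      = ∑ l ∈ Finset.range (k + 1),
          (((n - k + l).choose l : ℝ)) * esymm n (k - l) μ * t ^ l := by
  set p : ℝ[X] := ∏ i, (X - C (μ i)) with hp
  have hdeg : p.natDegree = n := by
    rw [hp, Polynomial.natDegree_prod_of_monic _ _ (fun i _ => monic_X_sub_C _)]
    simp
  have h1 : (∏ i, (X - C (μ i + t))) = taylor (-t) p := by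
    rw [taylor_apply, hp, Polynomial.prod_comp]
    refine Finset.prod_congr rfl fun i _ => ?_
    rw [sub_comp, X_comp, C_comp]
    rw [C_add, C_neg]
    ring
  have h2 : esymm n k (fun i => μ i + t)
      = (-1 : ℝ) ^ k * (taylor (-t) p).coeff (n - k) := by
    rw [esymm_eq_coeff n k hk, h1]
  rw [h2, taylor_coeff]
  have hdlt : (Polynomial.hasseDeriv (n - k) p).natDegree < k + 1 := by
    have := Polynomial.natDegree_hasseDeriv_le p (n - k)
    omega
  rw [Polynomial.eval_eq_sum_range' hdlt]
  rw [Finset.mul_sum]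
  refine Finset.sum_congr rfl fun j hj => ?_
  have hjk : j ≤ k := Nat.lt_succ_iff.mp (Finset.mem_range.mp hj)
  rw [Polynomial.hasseDeriv_coeff]
  have hidx : j + (n - k) = n - (k - j) := by omega
  have hcoeff : p.coeff (j + (n - k)) = (-1 : ℝ) ^ (k - j) * esymm n (k - j) μ := by
    have := esymm_eq_coeff n (k - j) (by omega) μ
    rw [← hp] at this
    rw [hidx, this, ← mul_assoc, ← pow_add, Even.neg_one_pow ⟨k - j, rfl⟩, one_mul]
  rw [hcoeff]
  have hch : ((j + (n - k)).choose (n - k) : ℝ) = ((n - k + j).choose j : ℝ) := by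
    rw [add_comm j (n - k), Nat.choose_symm_add]
  have hs2 : (-1 : ℝ) ^ k * ((-1 : ℝ) ^ (k - j) * (-1 : ℝ) ^ j) = 1 := by
    rw [← pow_add, ← pow_add]
    have h3 : k + (k - j + j) = 2 * k := by omega
    rw [h3]
    exact Even.neg_one_pow (even_two_mul k)
  rw [hch]
  calc (-1 : ℝ) ^ k * (((n - k + j).choose j : ℝ) * ((-1 : ℝ) ^ (k - j) * esymm n (k - j) μ)
        * (-t) ^ j)
      = ((-1 : ℝ) ^ k * ((-1 : ℝ) ^ (k - j) * (-1 : ℝ) ^ j))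
        * (((n - k + j).choose j : ℝ) * esymm n (k - j) μ * t ^ j) := by
        rw [neg_pow t j]; ring
    _ = ((n - k + j).choose j : ℝ) * esymm n (k - j) μ * t ^ j := by rw [hs2, one_mul]

lemma esymm_smul {n : ℕ} (k : ℕ) (c : ℝ) (μ : Fin n → ℝ) :
    esymm n k (fun i => c * μ i) = c ^ k * esymm n k μ := by
  rw [esymm, esymm, Finset.mul_sum]
  refine Finset.sum_congr rfl fun s hs => ?_
  rw [Finset.prod_mul_distrib, Finset.prod_const, (Finset.mem_powersetCard.mp hs).2]


lemma hess_eq {n : ℕ} {v : E n → ℝ} {x : E n} (hd : DifferentiableAt ℝ (fderiv ℝ v) x)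
    (i j : Fin n) :
    hess v x i j = fderiv ℝ (fderiv ℝ v) x (EuclideanSpace.single i 1)
      (EuclideanSpace.single j 1) := by
  show pd (fun y => pd v j y) i x = _
  rw [pd]
  have : (fun y => pd v j y)
      = fun y => (fderiv ℝ v y) (EuclideanSpace.single j 1) := rfl
  rw [this]
  rw [fderiv_clm_apply hd (differentiableAt_const _)]
  simp

lemma hess_herm {n : ℕ} {Ω : Set (E n)} (hΩ : IsOpen Ω) {v : E n → ℝ}
    (hv : ContDiffOn ℝ 2 v Ω) {x : E n} (hx : x ∈ Ω) : (hess v x).IsHermitian := by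
  have hca : ContDiffAt ℝ 2 v x := hv.contDiffAt (hΩ.mem_nhds hx)
  have hd : DifferentiableAt ℝ (fderiv ℝ v) x :=
    (hca.fderiv_right (m := 1) (by norm_num)).differentiableAt one_ne_zero
  have hsymm := hca.isSymmSndFDerivAt (by simp [minSmoothness_of_isRCLikeNormedField])
  show (hess v x)ᴴ = hess v x
  ext i j
  rw [Matrix.conjTranspose_apply, star_trivial, hess_eq hd, hess_eq hd]
  exact hsymm _ _

end Aux

theorem stmt6 (n k : ℕ) (hk : 1 ≤ k) (hkn : k ≤ n)
    (Ω : Set (E n)) (hΩ : IsOpen Ω) (v : E n → ℝ)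
    (hv : ContDiffOn ℝ 2 v Ω) (hvpos : ∀ x ∈ Ω, 0 < v x) :
    ∀ x ∈ Ω,
      Sk n k (Amat v x) =
        v x ^ k * Sk n k (hess v x) -
          ∑ l ∈ Finset.Icc 1 k,
            (((n - k + l).factorial : ℝ) / ((l.factorial : ℝ) * ((n - k).factorial : ℝ))) *
              Sk n (k - l) (Amat v x) * ((1 / 2) * gradsq v x) ^ l := by
  intro x hx
  set c := v x with hc
  set b := (1 / 2) * gradsq v x with hb
  set H := hess v x with hH0
  have hH : H.IsHermitian := hess_herm hΩ hv hx
  set lam := hH.eigenvalues with hlam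
  set μ : Fin n → ℝ := fun i => c * lam i + (-b) with hμ
  have hA : Amat v x = c • H + (-b) • (1 : Matrix (Fin n) (Fin n) ℝ) := by
    ext i j
    by_cases h : i = j <;>
      simp [Amat, Matrix.add_apply, Matrix.smul_apply, Matrix.one_apply, h, ← hb] <;> ring
  have hSkA : ∀ m : ℕ, m ≤ n → Sk n m (Amat v x) = esymm n m μ := by
    intro m hm
    rw [hA]
    exact Sk_affine m hm H hH c (-b)
  have hSkH : Sk n k H = esymm n k lam := by
    rw [Sk, eigs, dif_pos hH]
  have hshift : c ^ k * esymm n k lam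
      = ∑ l ∈ Finset.range (k + 1),
          (((n - k + l).choose l : ℝ)) * esymm n (k - l) μ * b ^ l := by
    rw [← esymm_smul k c lam]
    have : (fun i => c * lam i) = fun i => μ i + b := by
      ext i; simp [hμ]
    rw [this]
    exact esymm_shift k hkn μ b
  have hsplit : ∑ l ∈ Finset.range (k + 1),
        (((n - k + l).choose l : ℝ)) * esymm n (k - l) μ * b ^ l
      = esymm n k μ + ∑ l ∈ Finset.Icc 1 k,
          (((n - k + l).choose l : ℝ)) * esymm n (k - l) μ * b ^ l := by
    rw [Finset.range_eq_Ico, Finset.sum_eq_sum_Ico_succ_bot (Nat.succ_pos k),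
      Nat.succ_eq_add_one, Finset.Ico_add_one_right_eq_Icc]
    simp
  have hfact : ∀ l ∈ Finset.Icc 1 k,
      (((n - k + l).factorial : ℝ) / ((l.factorial : ℝ) * ((n - k).factorial : ℝ)))
        = (((n - k + l).choose l : ℝ)) := by
    intro l _
    rw [Nat.cast_choose ℝ (show l ≤ n - k + l by omega)]
    have h5 : n - k + l - l = n - k := by omega
    rw [h5]
  rw [hSkA k hkn, hSkH]
  rw [Finset.sum_congr rfl fun l hl => by
    rw [hfact l hl, hSkA (k - l) (by omega)]]
  rw [hshift, hsplit]
  ring
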